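/- The quotient A-algebra A[e₁, e₂]/( e₁² − (t₁+t₂)e₁ − 2e₂ + 2t₁t₂ , e₂² − (t₁+t₂)²e₂ + t₁t₂(t₁+t₂)e₁ − t₁²t₂² , e₁e₂ − 2(t₁+t₂)e₂ + t₁t₂e₁ ) is isomorphic as an A-algebra to A[e₁]/((e₁ − 2t₁)(e₁ − 2t₂)(e₁ − (t₁+t₂))), via the map fixing e₁ and sending e₂ to (e₁² − (t₁+t₂)e₁ + 2t₁t₂)/2. -/

import Mathlib

set_option synthInstance.maxHeartbeats 1000000
set_option maxHeartbeats 1000000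

noncomputable section

namespace Paper9

open MvPolynomial in
section

/-- The Laurent polynomial ring `A = k[t₁^{±1}, t₂^{±1}]`, realized as the group algebra
of `ℤ²` over `k`. -/
abbrev A (k : Type) [Field k] : Type := AddMonoidAlgebra k (Fin 2 →₀ ℤ)

variable (k : Type) [Field k]

/-- The Laurent variable `tᵢ₊₁ ∈ A`. -/
def t (i : Fin 2) : A k := AddMonoidAlgebra.single (Finsupp.single i 1) 1

/-- The ideal of `A[e₁, e₂]` generated by
`e₁² − (t₁+t₂)e₁ − 2e₂ + 2t₁t₂`,
`e₂² − (t₁+t₂)²e₂ + t₁t₂(t₁+t₂)e₁ − t₁²t₂²` and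
`e₁e₂ − 2(t₁+t₂)e₂ + t₁t₂e₁`, where `e₁ = X 0` and `e₂ = X 1`. -/
def rIdeal : Ideal (MvPolynomial (Fin 2) (A k)) :=
  Ideal.span
    { (X 0) ^ 2 - C (t k 0 + t k 1) * X 0 - 2 * X 1 + C (2 * (t k 0 * t k 1)),
      (X 1) ^ 2 - C ((t k 0 + t k 1) ^ 2) * X 1 + C (t k 0 * t k 1 * (t k 0 + t k 1)) * X 0
        - C ((t k 0) ^ 2 * (t k 1) ^ 2),
      X 0 * X 1 - C (2 * (t k 0 + t k 1)) * X 1 + C (t k 0 * t k 1) * X 0 }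

/-- The first presented `A`-algebra. -/
abbrev Q₁ : Type := MvPolynomial (Fin 2) (A k) ⧸ rIdeal k

/-- The class of `eᵢ₊₁` in `Q₁`. -/
def e (i : Fin 2) : Q₁ k := Ideal.Quotient.mk (rIdeal k) (X i)

/-- The ideal `((e₁ − 2t₁)(e₁ − 2t₂)(e₁ − (t₁ + t₂)))` of `A[e₁]`. -/
def qIdeal : Ideal (Polynomial (A k)) :=
  Ideal.span {(Polynomial.X - Polynomial.C (2 * t k 0)) *
      (Polynomial.X - Polynomial.C (2 * t k 1)) *
      (Polynomial.X - Polynomial.C (t k 0 + t k 1))}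

/-- The second presented `A`-algebra `A[e₁]/((e₁ − 2t₁)(e₁ − 2t₂)(e₁ − (t₁ + t₂)))`. -/
abbrev Q₂ : Type := Polynomial (A k) ⧸ qIdeal k

/-- The class of `e₁` in `Q₂`. -/
def e₁' : Q₂ k := Ideal.Quotient.mk (qIdeal k) Polynomial.X

end


section Aux

variable (k : Type) [Field k]

/-- The polynomial `c·(X² − (t₁+t₂)X + 2t₁t₂)` used to define the forward map. -/
def Ypoly (c : A k) : Polynomial (A k) :=
  Polynomial.C c * (Polynomial.X ^ 2 - Polynomial.C (t k 0 + t k 1) * Polynomial.X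
    + Polynomial.C (2 * (t k 0 * t k 1)))

/-- The forward map on the polynomial ring. -/
def phi0 (c : A k) : MvPolynomial (Fin 2) (A k) →ₐ[A k] Q₂ k :=
  (Ideal.Quotient.mkₐ (A k) (qIdeal k)).comp
    (MvPolynomial.aeval ![Polynomial.X, Ypoly k c])

/-- The backward map on the polynomial ring. -/
def psi0 : Polynomial (A k) →ₐ[A k] Q₁ k :=
  (Ideal.Quotient.mkₐ (A k) (rIdeal k)).comp
    (Polynomial.aeval (MvPolynomial.X 0))

end Aux

/-- The `A`-algebra
`A[e₁, e₂]/(e₁² − (t₁+t₂)e₁ − 2e₂ + 2t₁t₂, e₂² − (t₁+t₂)²e₂ + t₁t₂(t₁+t₂)e₁ − t₁²t₂²,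
e₁e₂ − 2(t₁+t₂)e₂ + t₁t₂e₁)` is isomorphic as an `A`-algebra to
`A[e₁]/((e₁ − 2t₁)(e₁ − 2t₂)(e₁ − (t₁+t₂)))`, via the map fixing `e₁` and sending `e₂`
to `(e₁² − (t₁+t₂)e₁ + 2t₁t₂)/2` (the latter condition is expressed by multiplying
through by `2`, which is invertible since `char k ≠ 2`). -/

theorem statement9 (k : Type) [Field k] (hk : (2 : k) ≠ 0) :
    ∃ ψ : Q₁ k ≃ₐ[A k] Q₂ k,
      ψ (e k 0) = e₁' k ∧
      2 * ψ (e k 1) =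
        (e₁' k) ^ 2 - @algebraMap (A k) (Q₂ k) _ (Ideal.Quotient.semiring (qIdeal k)) _ (t k 0 + t k 1) * e₁' k
          + @algebraMap (A k) (Q₂ k) _ (Ideal.Quotient.semiring (qIdeal k)) _ (2 * (t k 0 * t k 1)) := by
  classical
  set c : A k := algebraMap k (A k) 2⁻¹ with hcdef
  have hc : (2 : A k) * c = 1 := by
    rw [hcdef, ← map_ofNat (algebraMap k (A k)) 2, ← map_mul, mul_inv_cancel₀ hk, map_one]
  have hc' : (2 : Polynomial (A k)) * Polynomial.C c = 1 := by
    rw [← Polynomial.C_1, ← hc, map_mul, map_ofNat]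
  have hcm : (2 : MvPolynomial (Fin 2) (A k)) * MvPolynomial.C c = 1 := by
    rw [← MvPolynomial.C_1, ← hc, map_mul, map_ofNat]
  -- the forward map kills the relation ideal
  have hg : ∀ a ∈ rIdeal k, phi0 k c a = 0 := by
    have hle : rIdeal k ≤ RingHom.ker (phi0 k c) := by
      rw [rIdeal, Ideal.span_le]
      rintro x hx
      simp only [Set.mem_insert_iff, Set.mem_singleton_iff] at hx
      simp only [SetLike.mem_coe, RingHom.mem_ker]
      rcases hx with rfl | rfl | rfl
      all_goals rw [phi0, AlgHom.comp_apply, Ideal.Quotient.mkₐ_eq_mk,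
          Ideal.Quotient.eq_zero_iff_mem, qIdeal, Ideal.mem_span_singleton]
      all_goals simp only [map_sub, map_add, map_mul, map_pow, map_ofNat, MvPolynomial.aeval_X,
          MvPolynomial.aeval_C, Matrix.cons_val_zero, Matrix.cons_val_one, Matrix.head_cons,
          Polynomial.algebraMap_eq, Ypoly]
      · refine ⟨0, ?_⟩
        linear_combination (-(Polynomial.X ^ 2 - (Polynomial.C (t k 0) + Polynomial.C (t k 1)) *
          Polynomial.X + 2 * (Polynomial.C (t k 0) * Polynomial.C (t k 1)))) * hc'
      · refine ⟨Polynomial.C c ^ 2 * (Polynomial.X + (Polynomial.C (t k 0) + Polynomial.C (t k 1))), ?_⟩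
        linear_combination ((Polynomial.C (t k 0) + Polynomial.C (t k 1)) ^ 2 * Polynomial.C c *
            (Polynomial.X ^ 2 - (Polynomial.C (t k 0) + Polynomial.C (t k 1)) * Polynomial.X +
              2 * (Polynomial.C (t k 0) * Polynomial.C (t k 1)))
          - Polynomial.C (t k 0) * Polynomial.C (t k 1) *
              (Polynomial.C (t k 0) + Polynomial.C (t k 1)) * Polynomial.X *
              (2 * Polynomial.C c + 1)
          + (Polynomial.C (t k 0) * Polynomial.C (t k 1)) ^ 2 * (2 * Polynomial.C c + 1)) * hc'
      · refine ⟨Polynomial.C c, ?_⟩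
        linear_combination (-(Polynomial.C (t k 0) * Polynomial.C (t k 1) * Polynomial.X)) * hc'
    intro a ha
    exact hle ha
  -- the backward map kills the cubic ideal
  have hq : ∀ a ∈ qIdeal k, psi0 k a = 0 := by
    have hle : qIdeal k ≤ RingHom.ker (psi0 k) := by
      rw [qIdeal, Ideal.span_le, Set.singleton_subset_iff]
      simp only [SetLike.mem_coe, RingHom.mem_ker]
      rw [psi0, AlgHom.comp_apply, Ideal.Quotient.mkₐ_eq_mk, Ideal.Quotient.eq_zero_iff_mem]
      have h1 : (MvPolynomial.X 0) ^ 2 - MvPolynomial.C (t k 0 + t k 1) * MvPolynomial.X 0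
          - 2 * MvPolynomial.X 1 + MvPolynomial.C (2 * (t k 0 * t k 1)) ∈ rIdeal k :=
        Ideal.subset_span (by left; rfl)
      have h3 : MvPolynomial.X 0 * MvPolynomial.X 1
          - MvPolynomial.C (2 * (t k 0 + t k 1)) * MvPolynomial.X 1
          + MvPolynomial.C (t k 0 * t k 1) * MvPolynomial.X 0 ∈ rIdeal k :=
        Ideal.subset_span (by right; right; rfl)
      have key : (Polynomial.aeval (MvPolynomial.X 0 : MvPolynomial (Fin 2) (A k)))
          ((Polynomial.X - Polynomial.C (2 * t k 0)) *
            (Polynomial.X - Polynomial.C (2 * t k 1)) *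
            (Polynomial.X - Polynomial.C (t k 0 + t k 1))) =
          (MvPolynomial.X 0 - MvPolynomial.C (2 * (t k 0 + t k 1))) *
            ((MvPolynomial.X 0) ^ 2 - MvPolynomial.C (t k 0 + t k 1) * MvPolynomial.X 0
              - 2 * MvPolynomial.X 1 + MvPolynomial.C (2 * (t k 0 * t k 1)))
          + 2 * (MvPolynomial.X 0 * MvPolynomial.X 1
              - MvPolynomial.C (2 * (t k 0 + t k 1)) * MvPolynomial.X 1
              + MvPolynomial.C (t k 0 * t k 1) * MvPolynomial.X 0) := by
        simp only [map_sub, map_mul, map_add, map_ofNat, Polynomial.aeval_X,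
          Polynomial.aeval_C, MvPolynomial.algebraMap_eq]
        ring
      rw [key]
      exact add_mem (Ideal.mul_mem_left _ _ h1) (Ideal.mul_mem_left _ _ h3)
    intro a ha
    exact hle ha
  set φ : Q₁ k →ₐ[A k] Q₂ k := Ideal.Quotient.liftₐ (rIdeal k) (phi0 k c) hg with hφ
  set ψ : Q₂ k →ₐ[A k] Q₁ k := Ideal.Quotient.liftₐ (qIdeal k) (psi0 k) hq with hψ
  have hφmk : ∀ a, φ (Ideal.Quotient.mk (rIdeal k) a) = phi0 k c a := by
    intro a
    rw [hφ, Ideal.Quotient.liftₐ_apply]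
    rfl
  have hψmk : ∀ a, ψ (Ideal.Quotient.mk (qIdeal k) a) = psi0 k a := by
    intro a
    rw [hψ, Ideal.Quotient.liftₐ_apply]
    rfl
  have h₁ : φ.comp ψ = AlgHom.id (A k) (Q₂ k) := by
    apply Ideal.Quotient.algHom_ext
    apply Polynomial.algHom_ext
    simp only [AlgHom.comp_apply, Ideal.Quotient.mkₐ_eq_mk, AlgHom.id_apply]
    rw [hψmk, psi0, AlgHom.comp_apply, Polynomial.aeval_X, Ideal.Quotient.mkₐ_eq_mk, hφmk,
      phi0, AlgHom.comp_apply, MvPolynomial.aeval_X, Ideal.Quotient.mkₐ_eq_mk]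
    simp
  have h₂ : ψ.comp φ = AlgHom.id (A k) (Q₁ k) := by
    apply Ideal.Quotient.algHom_ext
    apply MvPolynomial.algHom_ext
    intro i
    simp only [AlgHom.comp_apply, Ideal.Quotient.mkₐ_eq_mk, AlgHom.id_apply]
    rw [hφmk, phi0, AlgHom.comp_apply, MvPolynomial.aeval_X, Ideal.Quotient.mkₐ_eq_mk, hψmk]
    have h1m : (MvPolynomial.X 0) ^ 2 - MvPolynomial.C (t k 0 + t k 1) * MvPolynomial.X 0
        - 2 * MvPolynomial.X 1 + MvPolynomial.C (2 * (t k 0 * t k 1)) ∈ rIdeal k :=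
      Ideal.subset_span (by left; rfl)
    fin_cases i
    · simp [psi0]
    · rw [psi0, AlgHom.comp_apply, Ideal.Quotient.mkₐ_eq_mk]
      simp only [Fin.mk_one, Fin.isValue, Matrix.cons_val_one, Matrix.head_cons, Matrix.cons_val_zero]
      rw [Ideal.Quotient.eq]
      convert Ideal.mul_mem_left _ (MvPolynomial.C c) h1m using 1
      simp only [Ypoly, map_sub, map_add, map_mul, map_pow, map_ofNat, Polynomial.aeval_X,
        Polynomial.aeval_C, MvPolynomial.algebraMap_eq]
      linear_combination (MvPolynomial.X 1 : MvPolynomial (Fin 2) (A k)) * hcm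
  refine ⟨AlgEquiv.ofAlgHom φ ψ h₁ h₂, ?_, ?_⟩
  · show φ (e k 0) = e₁' k
    rw [e, hφmk, phi0, AlgHom.comp_apply, MvPolynomial.aeval_X, Ideal.Quotient.mkₐ_eq_mk]
    simp [e₁']
  · show 2 * φ (e k 1) = _
    rw [e, hφmk, phi0, AlgHom.comp_apply, MvPolynomial.aeval_X, Ideal.Quotient.mkₐ_eq_mk]
    simp only [Matrix.cons_val_one, Matrix.head_cons, Matrix.cons_val_zero, Ypoly]
    have : (2 : Q₂ k) * Ideal.Quotient.mk (qIdeal k)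
        (Polynomial.C c * (Polynomial.X ^ 2 - Polynomial.C (t k 0 + t k 1) * Polynomial.X
          + Polynomial.C (2 * (t k 0 * t k 1)))) =
        Ideal.Quotient.mk (qIdeal k) (Polynomial.X ^ 2
          - Polynomial.C (t k 0 + t k 1) * Polynomial.X
          + Polynomial.C (2 * (t k 0 * t k 1))) := by
      rw [← map_ofNat (Ideal.Quotient.mk (qIdeal k)) 2, ← map_mul, ← mul_assoc, hc', one_mul]
    rw [this]
    have halg : ∀ a : A k, @algebraMap (A k) (Q₂ k) _ (Ideal.Quotient.semiring (qIdeal k)) _ a =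
        Ideal.Quotient.mk (qIdeal k) (Polynomial.C a) := fun a => rfl
    rw [halg, halg, e₁']
    simp only [← map_pow, ← map_mul, ← map_sub, ← map_add]


end Paper9
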